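/- Let f_n(x) = 2T_n(x/2 + 1) − 2 (the chain of Chebyshev type with a = 1/2, b = 1). Then for all positive integers m, n: f_m(x) divides f_n(x) in ℚ[x] if and only if m divides n. -/

import Mathlib

open Polynomial

lemma T_eval_one_rat (k : ℤ) : (Polynomial.Chebyshev.T ℚ k).eval 1 = 1 := by
  have hR : (Polynomial.Chebyshev.T ℝ k).eval 1 = 1 := by
    have := Polynomial.Chebyshev.T_real_cos 0 k
    simpa using this
  have hmap : (algebraMap ℚ ℝ) ((Polynomial.Chebyshev.T ℚ k).eval 1) = 1 := by
    rw [← Polynomial.eval₂_at_one, ← Polynomial.eval_map, Polynomial.Chebyshev.map_T, hR]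
  have : (algebraMap ℚ ℝ) ((Polynomial.Chebyshev.T ℚ k).eval 1) = (algebraMap ℚ ℝ) 1 := by
    rw [hmap, map_one]
  exact (algebraMap ℚ ℝ).injective this

theorem F_dvd_iff (f : ℕ → ℚ[X])
    (hf : ∀ j : ℕ, f j =
      C 2 * (Polynomial.Chebyshev.T ℚ (j : ℤ)).comp (C (1/2) * X + C 1) - C 2)
    (m n : ℕ) (hm : 0 < m) (hn : 0 < n) :
    f m ∣ f n ↔ m ∣ n := by
  constructor
  · -- divisibility implies m ∣ n
    rintro ⟨g, hg⟩
    set θ : ℝ := 2 * Real.pi / m with hθ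
    set x₀ : ℝ := 2 * Real.cos θ - 2 with hx₀
    have hmR : (m : ℝ) ≠ 0 := Nat.cast_ne_zero.2 hm.ne'
    have hcompmap : ((C (1/2) * X + C 1 : ℚ[X]).map (algebraMap ℚ ℝ))
        = C (1/2) * X + C 1 := by
      simp only [Polynomial.map_add, Polynomial.map_mul, Polynomial.map_C, Polynomial.map_X]
      norm_num
    have heval : ∀ j : ℕ, ((f j).map (algebraMap ℚ ℝ)).eval x₀ = 2 * Real.cos (j * θ) - 2 := by
      intro j
      rw [hf j]
      simp only [Polynomial.map_sub, Polynomial.map_mul, Polynomial.map_comp,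
        Polynomial.Chebyshev.map_T, Polynomial.map_C, hcompmap]
      have h2 : (algebraMap ℚ ℝ) 2 = 2 := by norm_num
      rw [h2, Polynomial.eval_sub, Polynomial.eval_mul, Polynomial.eval_comp]
      have harg : (C (1/2) * X + C 1 : ℝ[X]).eval x₀ = Real.cos θ := by
        simp [hx₀]; ring
      rw [harg, Polynomial.Chebyshev.T_real_cos]
      simp only [Polynomial.eval_C]
      push_cast
      ring
    have hfm : ((f m).map (algebraMap ℚ ℝ)).eval x₀ = 0 := by
      rw [heval m]
      have : (m : ℝ) * θ = 2 * Real.pi := by rw [hθ]; field_simp [hmR]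
      rw [this, Real.cos_two_pi]; ring
    have hfn : ((f n).map (algebraMap ℚ ℝ)).eval x₀ = 0 := by
      rw [hg, Polynomial.map_mul, Polynomial.eval_mul, hfm, zero_mul]
    rw [heval n] at hfn
    have hcos : Real.cos (n * θ) = 1 := by linarith
    obtain ⟨k, hk⟩ := (Real.cos_eq_one_iff _).1 hcos
    have hkm : (k : ℝ) * m = n := by
      rw [hθ] at hk
      have hpi : Real.pi ≠ 0 := Real.pi_ne_zero
      field_simp at hk
      nlinarith [hk, Real.pi_pos]
    have hkm' : (k * (m : ℤ) : ℤ) = (n : ℤ) := by exact_mod_cast hkm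
    have : (m : ℤ) ∣ (n : ℤ) := ⟨k, by linarith [hkm']⟩
    exact_mod_cast this
  · -- m ∣ n implies divisibility
    rintro ⟨k, rfl⟩
    have hdvd1 : (X - C 1) ∣ (Polynomial.Chebyshev.T ℚ (k : ℤ) - C 1) := by
      rw [Polynomial.dvd_iff_isRoot]
      simp [Polynomial.IsRoot, T_eval_one_rat]
    obtain ⟨g, hgeq⟩ := hdvd1
    refine ⟨g.comp ((Polynomial.Chebyshev.T ℚ (m : ℤ)).comp (C (1/2) * X + C 1)), ?_⟩
    have hTmul : Polynomial.Chebyshev.T ℚ ((m * k : ℕ) : ℤ)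
        = (Polynomial.Chebyshev.T ℚ (k : ℤ)).comp (Polynomial.Chebyshev.T ℚ (m : ℤ)) := by
      push_cast
      rw [mul_comm (m : ℤ) (k : ℤ)]
      exact Polynomial.Chebyshev.T_mul ℚ k m
    rw [hf (m * k), hf m, hTmul, Polynomial.comp_assoc]
    have key := congrArg
      (fun p => (C 2 : ℚ[X]) *
        p.comp ((Polynomial.Chebyshev.T ℚ (m : ℤ)).comp (C (1/2) * X + C 1))) hgeq
    simp only [Polynomial.sub_comp, Polynomial.mul_comp, Polynomial.X_comp,
      Polynomial.C_comp] at key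
    simp only [Polynomial.C_1] at key ⊢
    linear_combination key
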